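/- In a staggered adoption design, the overall bias of the imputation estimator for cohort G_g at post-treatment relative period s (calendar time t = t_g + s − 1) satisfies δ^Imp_{G_g,s} = Δ^Imp_{G_g,s} + Σ_{k ∈ K_g(t)} w_k · Δ^Imp_{G_k, s_k(t)}, where K_g(t) = {k : t_g < t_k ≤ t}, s_k(t) = t − t_k + 1, and w_k = N_k / (Σ_{j=k}^G N_j + N_∞). -/

import Mathlib

open Finset

/-- Untreated observations: pairs `(i,t)` with `t ∈ {1,…,T}` and `t < adopt i`. -/
def untreatedObs13 {U : Type*} [Fintype U] (T : ℕ) (adopt : U → ℕ) : Finset (U × ℕ) :=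
  (Finset.univ ×ˢ Finset.Icc 1 T).filter (fun p => p.2 < adopt p.1)

/-- Average of `Y0` over group `A` at period `t`. -/
noncomputable def avgAt13 {U : Type*} (Y0 : U → ℕ → ℝ) (A : Finset U) (t : ℕ) : ℝ :=
  (∑ i ∈ A, Y0 i t) / (A.card : ℝ)

/-- Average of `Y0` over group `A` and periods `P`. -/
noncomputable def avgOver13 {U : Type*} (Y0 : U → ℕ → ℝ) (A : Finset U) (P : Finset ℕ) : ℝ :=
  (∑ i ∈ A, ∑ k ∈ P, Y0 i k) / ((A.card : ℝ) * (P.card : ℝ))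

/-- Block bias of the cohort adopting at `u`, evaluated at calendar time `t` (for
the imputation estimator): trend of the cohort minus trend of its initial control
group `{j : u < adopt j}`, relative to the pre-period average over `{1,…,u−1}`. -/
noncomputable def blockBias13 {U : Type*} [Fintype U] (adopt : U → ℕ)
    (Y0 : U → ℕ → ℝ) (u t : ℕ) : ℝ :=
  (avgAt13 Y0 (Finset.univ.filter (fun i => adopt i = u)) t
      - avgOver13 Y0 (Finset.univ.filter (fun i => adopt i = u)) (Finset.Icc 1 (u - 1)))
    - (avgAt13 Y0 (Finset.univ.filter (fun i => u < adopt i)) t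
      - avgOver13 Y0 (Finset.univ.filter (fun i => u < adopt i)) (Finset.Icc 1 (u - 1)))

/-- Adjustment weight of the cohort adopting at `u`:
`w_u = N_u / (N_u + |{j : adopt j > u}|)`, i.e. `N_k / (Σ_{j=k}^G N_j + N_∞)`. -/
noncomputable def weight13 {U : Type*} [Fintype U] (adopt : U → ℕ) (u : ℕ) : ℝ :=
  ((Finset.univ.filter (fun i : U => adopt i = u)).card : ℝ) /
    (((Finset.univ.filter (fun i : U => adopt i = u)).card : ℝ) +
      ((Finset.univ.filter (fun i : U => u < adopt i)).card : ℝ))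


lemma zero_of_quad13 (M S : ℝ) (hM : 0 ≤ M) (h : ∀ ε : ℝ, 0 ≤ ε ^ 2 * M - 2 * ε * S) : S = 0 := by
  have hM1 : (0:ℝ) < M + 1 := by linarith
  set q := S / (M + 1) with hqdef
  have hS : S = q * (M + 1) := by rw [hqdef, div_mul_cancel₀ S hM1.ne']
  have h1 := h q
  rw [hS] at h1
  have hq2 : q ^ 2 ≤ 0 := by nlinarith
  have hq0 : q = 0 := by
    have := le_antisymm hq2 (sq_nonneg q)
    exact pow_eq_zero_iff (n := 2) (by norm_num) |>.mp this
  rw [hS, hq0, zero_mul]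

lemma NE_dir13 {U : Type*} [Fintype U] [DecidableEq U]
    (T : ℕ) (adopt : U → ℕ) (Y : U → ℕ → ℝ) (α : U → ℝ) (ξ : ℕ → ℝ)
    (hmin : ∀ (α' : U → ℝ) (ξ' : ℕ → ℝ),
      ∑ p ∈ untreatedObs13 T adopt, (Y p.1 p.2 - α p.1 - ξ p.2) ^ 2
        ≤ ∑ p ∈ untreatedObs13 T adopt, (Y p.1 p.2 - α' p.1 - ξ' p.2) ^ 2)
    (a : U → ℝ) (b : ℕ → ℝ) :
    ∑ p ∈ untreatedObs13 T adopt,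
      (Y p.1 p.2 - α p.1 - ξ p.2) * (a p.1 + b p.2) = 0 := by
  set s := untreatedObs13 T adopt
  set S := ∑ p ∈ s, (Y p.1 p.2 - α p.1 - ξ p.2) * (a p.1 + b p.2) with hS
  set M := ∑ p ∈ s, (a p.1 + b p.2) ^ 2 with hMdef
  have hM : 0 ≤ M := Finset.sum_nonneg fun p _ => sq_nonneg _
  refine zero_of_quad13 M S hM fun ε => ?_
  have h := hmin (fun i => α i + ε * a i) (fun k => ξ k + ε * b k)
  have hexp : ∑ p ∈ s, (Y p.1 p.2 - (α p.1 + ε * a p.1) - (ξ p.2 + ε * b p.2)) ^ 2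
      = ∑ p ∈ s, (Y p.1 p.2 - α p.1 - ξ p.2) ^ 2 + (ε ^ 2 * M - 2 * ε * S) := by
    rw [hS, hMdef, Finset.mul_sum, Finset.mul_sum, ← Finset.sum_sub_distrib, ← Finset.sum_add_distrib]
    exact Finset.sum_congr rfl fun p _ => by ring
  rw [hexp] at h
  linarith

lemma NE_unit13 {U : Type*} [Fintype U] [DecidableEq U]
    (T : ℕ) (adopt : U → ℕ) (Y : U → ℕ → ℝ) (α : U → ℝ) (ξ : ℕ → ℝ)
    (hmin : ∀ (α' : U → ℝ) (ξ' : ℕ → ℝ),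
      ∑ p ∈ untreatedObs13 T adopt, (Y p.1 p.2 - α p.1 - ξ p.2) ^ 2
        ≤ ∑ p ∈ untreatedObs13 T adopt, (Y p.1 p.2 - α' p.1 - ξ' p.2) ^ 2)
    (i : U) :
    ∑ k ∈ (Finset.Icc 1 T).filter (fun k => k < adopt i), (Y i k - α i - ξ k) = 0 := by
  have h := NE_dir13 T adopt Y α ξ hmin (fun j => if j = i then 1 else 0) (fun _ => 0)
  rw [untreatedObs13, Finset.sum_filter, Finset.sum_product] at h
  simp only [add_zero, mul_ite, mul_one, mul_zero] at h
  rw [Finset.sum_eq_single i (fun j _ hj => by simp [hj]) (by simp)] at h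
  simp only [if_pos rfl] at h
  rw [Finset.sum_filter]
  exact h

lemma NE_time13 {U : Type*} [Fintype U] [DecidableEq U]
    (T : ℕ) (adopt : U → ℕ) (Y : U → ℕ → ℝ) (α : U → ℝ) (ξ : ℕ → ℝ)
    (hmin : ∀ (α' : U → ℝ) (ξ' : ℕ → ℝ),
      ∑ p ∈ untreatedObs13 T adopt, (Y p.1 p.2 - α p.1 - ξ p.2) ^ 2
        ≤ ∑ p ∈ untreatedObs13 T adopt, (Y p.1 p.2 - α' p.1 - ξ' p.2) ^ 2)
    (k : ℕ) (hk1 : 1 ≤ k) (hkT : k ≤ T) :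
    ∑ i ∈ Finset.univ.filter (fun i : U => k < adopt i), (Y i k - α i - ξ k) = 0 := by
  have h := NE_dir13 T adopt Y α ξ hmin (fun _ => 0) (fun m => if m = k then 1 else 0)
  rw [untreatedObs13, Finset.sum_filter, Finset.sum_product] at h
  simp only [zero_add, mul_ite, mul_one, mul_zero] at h
  rw [Finset.sum_comm] at h
  rw [Finset.sum_eq_single k (fun m _ hm => by simp [hm]) (by simp [Finset.mem_Icc]; omega)] at h
  simp only [if_pos rfl] at h
  rw [Finset.sum_filter]
  exact h

lemma split13 {U : Type*} [Fintype U] [DecidableEq U] (adopt : U → ℕ) (u w : ℕ)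
    (huw : u ≤ w) (f : U → ℝ) :
    ∑ i ∈ Finset.univ.filter (fun i => u < adopt i), f i
      = (∑ v ∈ Finset.Ioc u w, ∑ i ∈ Finset.univ.filter (fun i => adopt i = v), f i)
        + ∑ i ∈ Finset.univ.filter (fun i => w < adopt i), f i := by
  have h1 : ∑ v ∈ Finset.Ioc u w, ∑ i ∈ Finset.univ.filter (fun i => adopt i = v), f i
      = ∑ i ∈ Finset.univ.filter (fun i : U => adopt i ∈ Finset.Ioc u w), f i := by
    rw [← Finset.sum_fiberwise_of_maps_to (g := adopt)
      (fun x hx => (Finset.mem_filter.mp hx).2)]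
    refine Finset.sum_congr rfl fun v hv => ?_
    refine Finset.sum_congr ?_ fun _ _ => rfl
    ext i
    simp only [Finset.mem_filter, Finset.mem_univ, true_and, Finset.mem_Ioc] at hv ⊢
    omega
  have h2 : Finset.univ.filter (fun i : U => u < adopt i)
      = Finset.univ.filter (fun i : U => adopt i ∈ Finset.Ioc u w)
        ∪ Finset.univ.filter (fun i : U => w < adopt i) := by
    ext i; simp only [Finset.mem_filter, Finset.mem_univ, true_and, Finset.mem_union,
      Finset.mem_Ioc]; omega
  have hdisj : Disjoint (Finset.univ.filter (fun i : U => adopt i ∈ Finset.Ioc u w))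
      (Finset.univ.filter (fun i : U => w < adopt i)) := by
    rw [Finset.disjoint_left]
    intro i hi hi'
    simp only [Finset.mem_filter, Finset.mem_univ, true_and, Finset.mem_Ioc] at hi hi'
    omega
  rw [h2, Finset.sum_union hdisj, h1]

lemma splitcard13 {U : Type*} [Fintype U] [DecidableEq U] (adopt : U → ℕ) (u w : ℕ)
    (huw : u < w) :
    ((Finset.univ.filter (fun i : U => u < adopt i)).card : ℝ)
      = (∑ v ∈ Finset.Ioo u w, ((Finset.univ.filter (fun i : U => adopt i = v)).card : ℝ))
        + ((Finset.univ.filter (fun i : U => adopt i = w)).card : ℝ)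
        + ((Finset.univ.filter (fun i : U => w < adopt i)).card : ℝ) := by
  have h := split13 adopt u w huw.le (fun _ => (1 : ℝ))
  simp only [Finset.sum_const, nsmul_eq_mul, mul_one] at h
  rw [h, ← Finset.Ioo_insert_right huw, Finset.sum_insert Finset.right_notMem_Ioo]
  ring

lemma step13 {U : Type*} [Fintype U] [DecidableEq U] (adopt : U → ℕ) (u t : ℕ)
    (hc : ∀ w, w ≤ t → 0 < (Finset.univ.filter (fun i : U => w < adopt i)).card)
    (Δ : ℕ → ℝ) :
    ∑ v ∈ Finset.Ioc u t,
        (((Finset.univ.filter (fun i : U => adopt i = v)).card : ℝ) * Δ v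
          + ((Finset.univ.filter (fun i : U => adopt i = v)).card : ℝ)
            * ∑ w ∈ Finset.Ioc v t, weight13 adopt w * Δ w)
      = ((Finset.univ.filter (fun i : U => u < adopt i)).card : ℝ)
          * ∑ w ∈ Finset.Ioc u t, weight13 adopt w * Δ w := by
  rw [Finset.sum_add_distrib]
  have h1 : ∑ v ∈ Finset.Ioc u t,
      ((Finset.univ.filter (fun i : U => adopt i = v)).card : ℝ)
        * ∑ w ∈ Finset.Ioc v t, weight13 adopt w * Δ w
    = ∑ w ∈ Finset.Ioc u t,
        (∑ v ∈ Finset.Ioo u w, ((Finset.univ.filter (fun i : U => adopt i = v)).card : ℝ))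
          * (weight13 adopt w * Δ w) := by
    have hin : ∀ v ∈ Finset.Ioc u t,
        ((Finset.univ.filter (fun i : U => adopt i = v)).card : ℝ)
          * ∑ w ∈ Finset.Ioc v t, weight13 adopt w * Δ w
        = ∑ w ∈ Finset.Ioc u t, if v < w then
            ((Finset.univ.filter (fun i : U => adopt i = v)).card : ℝ)
              * (weight13 adopt w * Δ w) else 0 := by
      intro v hv
      rw [Finset.mul_sum]
      rw [show Finset.Ioc v t = (Finset.Ioc u t).filter (fun w => v < w) by
        ext w
        simp only [Finset.mem_Ioc, Finset.mem_filter] at *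
        omega]
      rw [Finset.sum_filter]
    rw [Finset.sum_congr rfl hin, Finset.sum_comm]
    refine Finset.sum_congr rfl fun w hw => ?_
    rw [← Finset.sum_filter]
    rw [show (Finset.Ioc u t).filter (fun v => v < w) = Finset.Ioo u w by
      ext v
      simp only [Finset.mem_Ioc, Finset.mem_filter, Finset.mem_Ioo] at *
      omega]
    rw [Finset.sum_mul]
  rw [h1, ← Finset.sum_add_distrib, Finset.mul_sum]
  refine Finset.sum_congr rfl fun w hw => ?_
  rw [Finset.mem_Ioc] at hw
  have hcard := splitcard13 adopt u w hw.1
  have hcw : (0:ℝ) < ((Finset.univ.filter (fun i : U => w < adopt i)).card : ℝ) := by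
    exact_mod_cast hc w hw.2
  have hden : ((Finset.univ.filter (fun i : U => adopt i = w)).card : ℝ)
      + ((Finset.univ.filter (fun i : U => w < adopt i)).card : ℝ) ≠ 0 := by positivity
  rw [hcard, weight13]
  field_simp
  ring

set_option maxHeartbeats 1000000 in
theorem imputation_bias_decomposition {U : Type*} [Fintype U] [DecidableEq U]
    (T : ℕ) (adopt : U → ℕ) (Y Y0 : U → ℕ → ℝ)
    (hadopt : ∀ i, 2 ≤ adopt i)
    (hnever : ∃ j, T < adopt j)
    (hY : ∀ i t, t < adopt i → Y i t = Y0 i t)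
    (α : U → ℝ) (ξ : ℕ → ℝ)
    (hmin : ∀ (α' : U → ℝ) (ξ' : ℕ → ℝ),
      ∑ p ∈ untreatedObs13 T adopt, (Y p.1 p.2 - α p.1 - ξ p.2) ^ 2
        ≤ ∑ p ∈ untreatedObs13 T adopt, (Y p.1 p.2 - α' p.1 - ξ' p.2) ^ 2)
    (tg s : ℕ) (htgT : tg ≤ T) (hcoh : ∃ i, adopt i = tg)
    (hs : 1 ≤ s) (ht : tg + s - 1 ≤ T) :
    (∑ i ∈ Finset.univ.filter (fun i => adopt i = tg),
        (Y0 i (tg + s - 1) - (α i + ξ (tg + s - 1)))) /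
      ((Finset.univ.filter (fun i : U => adopt i = tg)).card : ℝ)
    = blockBias13 adopt Y0 tg (tg + s - 1)
      + ∑ u ∈ Finset.Ioc tg (tg + s - 1),
          weight13 adopt u * blockBias13 adopt Y0 u (tg + s - 1) := by
  obtain ⟨i₀, hi₀⟩ := hcoh
  have htg2 : 2 ≤ tg := hi₀ ▸ hadopt i₀
  set t := tg + s - 1 with htdef
  have htgt : tg ≤ t := by omega
  have ht1 : 1 ≤ t := by omega
  -- positive control groups
  have hc : ∀ w, w ≤ t → 0 < (Finset.univ.filter (fun i : U => w < adopt i)).card := by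
    intro w hw
    obtain ⟨j, hj⟩ := hnever
    exact Finset.card_pos.mpr ⟨j, Finset.mem_filter.mpr ⟨Finset.mem_univ j, by omega⟩⟩
  -- normal equations in Y0 form
  have hNEu : ∀ i : U, adopt i - 1 ≤ T →
      ∑ k ∈ Finset.Icc 1 (adopt i - 1), (Y0 i k - α i - ξ k) = 0 := by
    intro i hi
    have h := NE_unit13 T adopt Y α ξ hmin i
    have h2 := hadopt i
    rw [show (Finset.Icc 1 T).filter (fun k => k < adopt i) = Finset.Icc 1 (adopt i - 1) by
      ext k; simp only [Finset.mem_filter, Finset.mem_Icc]; omega] at h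
    rw [← h]
    refine Finset.sum_congr rfl fun k hk => ?_
    rw [Finset.mem_Icc] at hk
    rw [hY i k (by omega)]
  have hNEt : ∀ k, 1 ≤ k → k ≤ T →
      ∑ i ∈ Finset.univ.filter (fun i : U => k < adopt i), (Y0 i k - α i - ξ k) = 0 := by
    intro k hk1 hkT
    have h := NE_time13 T adopt Y α ξ hmin k hk1 hkT
    rw [← h]
    refine Finset.sum_congr rfl fun i hi => ?_
    rw [Finset.mem_filter] at hi
    rw [hY i k hi.2]
  -- the unnormalized cohort bias at time t
  set D : ℕ → ℝ := fun v => ∑ i ∈ Finset.univ.filter (fun i => adopt i = v),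
    (Y0 i t - α i - ξ t) with hDdef
  -- (★): control-group residual sum equals sum of later cohorts' D
  have hStar : ∀ u, u ≤ t →
      ∑ i ∈ Finset.univ.filter (fun i : U => u < adopt i), (Y0 i t - α i - ξ t)
        = ∑ v ∈ Finset.Ioc u t, D v := by
    intro u hu
    rw [split13 adopt u t hu (fun i => Y0 i t - α i - ξ t),
      hNEt t ht1 ht, add_zero]
  -- (B): pre-period residual sum over the control group vanishes
  have hB : ∀ u, 2 ≤ u → u ≤ t →
      ∑ i ∈ Finset.univ.filter (fun i : U => u < adopt i),
        ∑ k ∈ Finset.Icc 1 (u - 1), (Y0 i k - α i - ξ k) = 0 := by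
    intro u hu2 hut
    have base : ∑ k ∈ Finset.Icc 1 (u - 1),
        ∑ i ∈ Finset.univ.filter (fun i : U => k < adopt i), (Y0 i k - α i - ξ k) = 0 := by
      refine Finset.sum_eq_zero fun k hk => ?_
      rw [Finset.mem_Icc] at hk
      exact hNEt k hk.1 (by omega)
    have hsplit : ∀ k ∈ Finset.Icc 1 (u - 1),
        ∑ i ∈ Finset.univ.filter (fun i : U => k < adopt i), (Y0 i k - α i - ξ k)
          = (∑ v ∈ Finset.Ioc k u, ∑ i ∈ Finset.univ.filter (fun i => adopt i = v),
              (Y0 i k - α i - ξ k))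
            + ∑ i ∈ Finset.univ.filter (fun i : U => u < adopt i), (Y0 i k - α i - ξ k) := by
      intro k hk
      rw [Finset.mem_Icc] at hk
      exact split13 adopt k u (by omega) _
    rw [Finset.sum_congr rfl hsplit, Finset.sum_add_distrib] at base
    have hT1 : ∑ k ∈ Finset.Icc 1 (u - 1),
        ∑ v ∈ Finset.Ioc k u, ∑ i ∈ Finset.univ.filter (fun i => adopt i = v),
          (Y0 i k - α i - ξ k) = 0 := by
      have hguard : ∀ k ∈ Finset.Icc 1 (u - 1),
          ∑ v ∈ Finset.Ioc k u, ∑ i ∈ Finset.univ.filter (fun i => adopt i = v),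
            (Y0 i k - α i - ξ k)
          = ∑ v ∈ Finset.Icc 1 u, if k < v then
              ∑ i ∈ Finset.univ.filter (fun i => adopt i = v), (Y0 i k - α i - ξ k) else 0 := by
        intro k hk
        rw [Finset.mem_Icc] at hk
        rw [show Finset.Ioc k u = (Finset.Icc 1 u).filter (fun v => k < v) by
          ext v; simp only [Finset.mem_Ioc, Finset.mem_filter, Finset.mem_Icc]; omega]
        rw [Finset.sum_filter]
      rw [Finset.sum_congr rfl hguard, Finset.sum_comm]
      refine Finset.sum_eq_zero fun v hv => ?_
      rw [Finset.mem_Icc] at hv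
      rw [← Finset.sum_filter]
      rw [show (Finset.Icc 1 (u - 1)).filter (fun k => k < v) = Finset.Icc 1 (v - 1) by
        ext k; simp only [Finset.mem_filter, Finset.mem_Icc]; omega]
      rw [Finset.sum_comm]
      refine Finset.sum_eq_zero fun i hi => ?_
      rw [Finset.mem_filter] at hi
      have := hNEu i (by omega)
      rw [hi.2] at this
      exact this
    rw [hT1, zero_add] at base
    rw [Finset.sum_comm]
    exact base
  -- residual expansion helpers
  have expandAt : ∀ (A : Finset U) (τ : ℕ),
      ∑ i ∈ A, (Y0 i τ - α i - ξ τ)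
        = (∑ i ∈ A, Y0 i τ) - (∑ i ∈ A, α i) - (A.card : ℝ) * ξ τ := by
    intro A τ
    rw [Finset.sum_sub_distrib, Finset.sum_sub_distrib, Finset.sum_const, nsmul_eq_mul]
  have expandPre : ∀ (A : Finset U) (u : ℕ),
      ∑ i ∈ A, ∑ k ∈ Finset.Icc 1 (u - 1), (Y0 i k - α i - ξ k)
        = (∑ i ∈ A, ∑ k ∈ Finset.Icc 1 (u - 1), Y0 i k)
          - ((u - 1 : ℕ) : ℝ) * (∑ i ∈ A, α i)
          - (A.card : ℝ) * (∑ k ∈ Finset.Icc 1 (u - 1), ξ k) := by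
    intro A u
    have hrow : ∀ i, ∑ k ∈ Finset.Icc 1 (u - 1), (Y0 i k - α i - ξ k)
        = (∑ k ∈ Finset.Icc 1 (u - 1), Y0 i k) - ((u - 1 : ℕ) : ℝ) * α i
          - (∑ k ∈ Finset.Icc 1 (u - 1), ξ k) := by
      intro i
      rw [Finset.sum_sub_distrib, Finset.sum_sub_distrib, Finset.sum_const, nsmul_eq_mul,
        Nat.card_Icc]
      norm_num
    rw [Finset.sum_congr rfl fun i _ => hrow i, Finset.sum_sub_distrib,
      Finset.sum_sub_distrib, Finset.mul_sum, Finset.sum_const, nsmul_eq_mul]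
  -- one-step recursion
  have hR : ∀ u, u ≤ t →
      D u = ((Finset.univ.filter (fun i : U => adopt i = u)).card : ℝ)
              * blockBias13 adopt Y0 u t
            + (((Finset.univ.filter (fun i : U => adopt i = u)).card : ℝ)
                / ((Finset.univ.filter (fun i : U => u < adopt i)).card : ℝ))
              * ∑ v ∈ Finset.Ioc u t, D v := by
    intro u hut
    rcases Finset.eq_empty_or_nonempty (Finset.univ.filter (fun i : U => adopt i = u))
      with hGe | ⟨j₀, hj₀⟩
    · rw [hDdef]
      simp [hGe]
    · rw [Finset.mem_filter] at hj₀
      have hu2 : 2 ≤ u := hj₀.2 ▸ hadopt j₀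
      have hn : (0:ℝ) < ((Finset.univ.filter (fun i : U => adopt i = u)).card : ℝ) := by
        exact_mod_cast Finset.card_pos.mpr ⟨j₀, Finset.mem_filter.mpr hj₀⟩
      have hcc : (0:ℝ) < ((Finset.univ.filter (fun i : U => u < adopt i)).card : ℝ) := by
        exact_mod_cast hc u hut
      have hp : (0:ℝ) < ((u - 1 : ℕ) : ℝ) := by
        exact_mod_cast (by omega : 0 < u - 1)
      -- linear relations
      have eA := expandPre (Finset.univ.filter (fun i : U => adopt i = u)) u
      have hA0 : ∑ i ∈ Finset.univ.filter (fun i : U => adopt i = u),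
          ∑ k ∈ Finset.Icc 1 (u - 1), (Y0 i k - α i - ξ k) = 0 := by
        refine Finset.sum_eq_zero fun i hi => ?_
        rw [Finset.mem_filter] at hi
        have := hNEu i (by omega)
        rw [hi.2] at this
        exact this
      rw [hA0] at eA
      have eB := expandPre (Finset.univ.filter (fun i : U => u < adopt i)) u
      rw [hB u hu2 hut] at eB
      have eS := expandAt (Finset.univ.filter (fun i : U => u < adopt i)) t
      rw [hStar u hut] at eS
      have hDu : D u = (∑ i ∈ Finset.univ.filter (fun i : U => adopt i = u), Y0 i t)
          - (∑ i ∈ Finset.univ.filter (fun i : U => adopt i = u), α i)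
          - ((Finset.univ.filter (fun i : U => adopt i = u)).card : ℝ) * ξ t := by
        rw [hDdef]
        exact expandAt _ t
      -- solve
      have hAα : (∑ i ∈ Finset.univ.filter (fun i : U => adopt i = u), α i)
          = ((∑ i ∈ Finset.univ.filter (fun i : U => adopt i = u),
              ∑ k ∈ Finset.Icc 1 (u - 1), Y0 i k)
            - ((Finset.univ.filter (fun i : U => adopt i = u)).card : ℝ)
                * (∑ k ∈ Finset.Icc 1 (u - 1), ξ k)) / ((u - 1 : ℕ) : ℝ) := by
        rw [eq_div_iff hp.ne']
        linarith [eA]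
      have hBα : (∑ i ∈ Finset.univ.filter (fun i : U => u < adopt i), α i)
          = ((∑ i ∈ Finset.univ.filter (fun i : U => u < adopt i),
              ∑ k ∈ Finset.Icc 1 (u - 1), Y0 i k)
            - ((Finset.univ.filter (fun i : U => u < adopt i)).card : ℝ)
                * (∑ k ∈ Finset.Icc 1 (u - 1), ξ k)) / ((u - 1 : ℕ) : ℝ) := by
        rw [eq_div_iff hp.ne']
        linarith [eB]
      have hξt : ξ t = ((∑ i ∈ Finset.univ.filter (fun i : U => u < adopt i), Y0 i t)
          - (∑ i ∈ Finset.univ.filter (fun i : U => u < adopt i), α i)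
          - ∑ v ∈ Finset.Ioc u t, D v)
            / ((Finset.univ.filter (fun i : U => u < adopt i)).card : ℝ) := by
        rw [eq_div_iff hcc.ne']
        linarith [eS]
      rw [hDu, hξt, hBα, hAα, blockBias13, avgAt13, avgOver13, avgAt13, avgOver13,
        Nat.card_Icc]
      have hcast : ((u - 1 + 1 - 1 : ℕ) : ℝ) = ((u - 1 : ℕ) : ℝ) := by norm_num
      rw [hcast]
      have hu1 : (1:ℝ) < (u:ℝ) := by exact_mod_cast (by omega : 1 < u)
      simp only [Nat.cast_sub (show 1 ≤ u by omega), Nat.cast_one]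
      have hp2 : ((u:ℝ) - 1) ≠ 0 := by linarith
      generalize (∑ i ∈ Finset.univ.filter (fun i : U => adopt i = u), Y0 i t) = a1 at *
      generalize (∑ i ∈ Finset.univ.filter (fun i : U => u < adopt i), Y0 i t) = a2 at *
      generalize (∑ i ∈ Finset.univ.filter (fun i : U => adopt i = u), ∑ k ∈ Finset.Icc 1 (u - 1), Y0 i k) = a3 at *
      generalize (∑ i ∈ Finset.univ.filter (fun i : U => u < adopt i), ∑ k ∈ Finset.Icc 1 (u - 1), Y0 i k) = a4 at *
      generalize (∑ k ∈ Finset.Icc 1 (u - 1), ξ k) = a5 at *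
      generalize (∑ v ∈ Finset.Ioc u t, D v) = a6 at *
      generalize ((Finset.univ.filter (fun i : U => adopt i = u)).card : ℝ) = n1 at *
      generalize ((Finset.univ.filter (fun i : U => u < adopt i)).card : ℝ) = n2 at *
      generalize (u : ℝ) = x at *
      field_simp
      ring
  -- closed form by reverse induction
  have hQ : ∀ n : ℕ, ∀ u : ℕ, u ≤ t → t - u ≤ n →
      D u = ((Finset.univ.filter (fun i : U => adopt i = u)).card : ℝ)
              * blockBias13 adopt Y0 u t
            + ((Finset.univ.filter (fun i : U => adopt i = u)).card : ℝ)
              * ∑ w ∈ Finset.Ioc u t, weight13 adopt w * blockBias13 adopt Y0 w t := by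
    intro n
    induction n with
    | zero =>
      intro u hu hn
      have hut : u = t := by omega
      rw [hut, hR t le_rfl, Finset.Ioc_self]
      simp only [Finset.sum_empty, mul_zero, add_zero]
    | succ n ih =>
      intro u hu hn
      rw [hR u hu]
      have hrw : ∀ v ∈ Finset.Ioc u t, D v
          = ((Finset.univ.filter (fun i : U => adopt i = v)).card : ℝ)
              * blockBias13 adopt Y0 v t
            + ((Finset.univ.filter (fun i : U => adopt i = v)).card : ℝ)
              * ∑ w ∈ Finset.Ioc v t, weight13 adopt w * blockBias13 adopt Y0 w t := by
        intro v hv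
        rw [Finset.mem_Ioc] at hv
        exact ih v hv.2 (by omega)
      rw [Finset.sum_congr rfl hrw,
        step13 adopt u t hc (fun w => blockBias13 adopt Y0 w t)]
      have hcc : ((Finset.univ.filter (fun i : U => u < adopt i)).card : ℝ) ≠ 0 := by
        have := hc u hu
        positivity
      congr 1
      field_simp
  -- assemble
  have hfin := hQ (t - tg) tg htgt le_rfl
  have hng : (0:ℝ) < ((Finset.univ.filter (fun i : U => adopt i = tg)).card : ℝ) := by
    exact_mod_cast Finset.card_pos.mpr ⟨i₀, Finset.mem_filter.mpr ⟨Finset.mem_univ i₀, hi₀⟩⟩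
  have hsum : ∑ i ∈ Finset.univ.filter (fun i => adopt i = tg),
      (Y0 i t - (α i + ξ t)) = D tg := by
    rw [hDdef]
    exact Finset.sum_congr rfl fun i _ => by ring
  rw [hsum, hfin]
  field_simp
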